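/- Suppose a finite connected graph Ḡ with node set N̄ satisfies the d-dimensional isoperimetric inequality (vol X)^{(d-1)/d} ≤ ν₂ |Ē(X, N̄∖X)| for all X ⊆ N̄ with vol X ≤ vol(N̄∖X), has total volume vol(N̄) ≤ ν₁ (R/R₀)^d, and all edge lengths at most R₀. Then the second-smallest generalized eigenvalue λ₂ of the length-weighted problem L̄u = λM̄u satisfies λ₂^{-1/2} ≤ C(ν₁, ν₂) R, where C depends only on ν₁ and ν₂ (and d); i.e. the Poincaré constant μ = R⁻¹λ₂^{-1/2} is bounded independently of R. -/

import Mathlib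

open scoped BigOperators

/-- Mass quadratic form `(M̄v, v) = Σ_x (1/2) Σ_{y∼x} |x-y| v(x)²`. -/
noncomputable def Mform {ι : Type} [Fintype ι] (adj : ι → ι → Prop) [DecidableRel adj]
    (len : ι → ι → ℝ) (v : ι → ℝ) : ℝ :=
  ∑ x, (1/2) * ∑ y, if adj x y then len x y * v x ^ 2 else 0

/-- Laplacian quadratic form `(L̄v, v) = Σ_x (1/2) Σ_{y∼x} (v(x)-v(y))²/|x-y|`. -/
noncomputable def Lform {ι : Type} [Fintype ι] (adj : ι → ι → Prop) [DecidableRel adj]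
    (len : ι → ι → ℝ) (v : ι → ℝ) : ℝ :=
  ∑ x, (1/2) * ∑ y, if adj x y then (v x - v y) ^ 2 / len x y else 0

/-- Node degree. -/
noncomputable def deg {ι : Type} [Fintype ι] (adj : ι → ι → Prop) [DecidableRel adj]
    (x : ι) : ℕ :=
  (Finset.univ.filter fun y => adj x y).card

/-- Volume of a node subset: sum of degrees. -/
noncomputable def vol {ι : Type} [Fintype ι] (adj : ι → ι → Prop) [DecidableRel adj]
    (X : Finset ι) : ℕ :=
  ∑ x ∈ X, deg adj x

/-- The set of (ordered) edges from `X` to its complement. -/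
noncomputable def edgeCut {ι : Type} [Fintype ι] [DecidableEq ι]
    (adj : ι → ι → Prop) [DecidableRel adj] (X : Finset ι) : Finset (ι × ι) :=
  Finset.univ.filter fun p => p.1 ∈ X ∧ p.2 ∉ X ∧ adj p.1 p.2

/-- The second-smallest generalized eigenvalue of `L̄u = λM̄u`, characterized as the
infimum of the Rayleigh quotient over nonzero `v` that are `M̄`-orthogonal to constants. -/
noncomputable def lam2 {ι : Type} [Fintype ι] (adj : ι → ι → Prop) [DecidableRel adj]
    (len : ι → ι → ℝ) : ℝ :=
  sInf {t : ℝ | ∃ v : ι → ℝ, v ≠ 0 ∧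
    (∑ x, ((1/2) * ∑ y, if adj x y then len x y else 0) * v x) = 0 ∧
    t = Lform adj len v / Mform adj len v}

section Aux
variable {ι : Type} [Fintype ι] [DecidableEq ι]
variable (adj : ι → ι → Prop) [DecidableRel adj]

lemma vol_mono {X Y : Finset ι} (hXY : X ⊆ Y) : vol adj X ≤ vol adj Y :=
  Finset.sum_le_sum_of_subset hXY

lemma vol_split (X : Finset ι) :
    vol adj X + vol adj (Finset.univ \ X) = vol adj Finset.univ := by
  unfold vol
  rw [add_comm, Finset.sum_sdiff (Finset.subset_univ X)]

lemma sum_ite_adj_const (x : ι) (c : ℝ) :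
    (∑ y, if adj x y then c else 0) = (deg adj x : ℝ) * c := by
  rw [← Finset.sum_filter, Finset.sum_const, deg, nsmul_eq_mul]

lemma sum_adj_swap (hsymm : ∀ x y, adj x y → adj y x) (f : ι → ι → ℝ) :
    (∑ x, ∑ y, if adj x y then f x y else 0)
      = ∑ x, ∑ y, if adj x y then f y x else 0 := by
  rw [Finset.sum_comm]
  refine Finset.sum_congr rfl fun y _ => Finset.sum_congr rfl fun x _ => ?_
  by_cases h : adj x y
  · rw [if_pos h, if_pos (hsymm x y h)]
  · rw [if_neg h, if_neg (fun h' => h (hsymm y x h'))]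

lemma edgeCut_card_eq (X : Finset ι) :
    ((edgeCut adj X).card : ℝ) =
      ∑ x, ∑ y, if x ∈ X ∧ y ∉ X ∧ adj x y then (1:ℝ) else 0 := by
  rw [edgeCut, Finset.card_filter]
  push_cast
  rw [Fintype.sum_prod_type]



set_option linter.unusedSectionVars false

lemma coarea (hsymm : ∀ x y, adj x y → adj y x) (h : ℝ) (hh : 0 ≤ h)
    (hcut : ∀ X : Finset ι, 2 * vol adj X ≤ vol adj Finset.univ →
      h * (vol adj X : ℝ) ≤ ((edgeCut adj X).card : ℝ)) :
    ∀ n : ℕ, ∀ g : ι → ℝ, (Finset.univ.filter fun x => g x ≠ 0).card ≤ n →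
      (∀ x, 0 ≤ g x) →
      2 * vol adj (Finset.univ.filter fun x => g x ≠ 0) ≤ vol adj Finset.univ →
      2 * h * ∑ x, (deg adj x : ℝ) * g x
        ≤ ∑ x, ∑ y, if adj x y then |g x - g y| else 0 := by
  intro n
  induction n with
  | zero =>
    intro g hcard hg _
    have hzero : ∀ x, g x = 0 := by
      intro x
      by_contra hx
      have : x ∈ Finset.univ.filter fun x => g x ≠ 0 := by simp [hx]
      have := Finset.card_pos.mpr ⟨x, this⟩
      omega
    simp [hzero]
  | succ n ih =>
    intro g hcard hg hsupp
    by_cases hne : (Finset.univ.filter fun x => g x ≠ 0).Nonempty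
    · obtain ⟨x₀, hx₀mem, hx₀min⟩ := Finset.exists_min_image _ g hne
      set S : Finset ι := Finset.univ.filter fun x => g x ≠ 0 with hS
      set m : ℝ := g x₀ with hm
      have hmpos : 0 < m := by
        have := (Finset.mem_filter.mp hx₀mem).2
        exact lt_of_le_of_ne (hg x₀) (Ne.symm this)
      have hmin : ∀ x, min (g x) m = if g x ≠ 0 then m else 0 := by
        intro x
        by_cases hx : g x = 0
        · simp [hx, min_eq_left hmpos.le]
        · have hxS : x ∈ S := by simp [hS, hx]
          simp [hx, min_eq_right (hx₀min x hxS)]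
      set g' : ι → ℝ := fun x => g x - min (g x) m with hg'def
      have hg' : ∀ x, 0 ≤ g' x := fun x => sub_nonneg.mpr (min_le_left _ _)
      have hsub : (Finset.univ.filter fun x => g' x ≠ 0) ⊆ S.erase x₀ := by
        intro x hx
        have hx' : g' x ≠ 0 := (Finset.mem_filter.mp hx).2
        have hgx : g x ≠ 0 := by
          intro h0
          apply hx'
          simp [hg'def, h0, min_eq_left hmpos.le]
        refine Finset.mem_erase.mpr ⟨?_, by simp [hS, hgx]⟩
        intro hxx0
        apply hx'
        subst hxx0
        simp [hg'def, hmin x, hgx]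
        exact sub_eq_zero.mpr hm.symm
      have hcard' : (Finset.univ.filter fun x => g' x ≠ 0).card ≤ n := by
        have h1 := Finset.card_le_card hsub
        have h2 := Finset.card_erase_of_mem hx₀mem
        omega
      have hsupp' : 2 * vol adj (Finset.univ.filter fun x => g' x ≠ 0)
          ≤ vol adj Finset.univ := by
        refine le_trans ?_ hsupp
        have : (Finset.univ.filter fun x => g' x ≠ 0) ⊆ S :=
          hsub.trans (Finset.erase_subset _ _)
        have := vol_mono adj this
        omega
      have hIH := ih g' hcard' hg' hsupp'
      -- pointwise identity
      have hpoint : ∀ x y, |g x - g y| = |g' x - g' y| + |min (g x) m - min (g y) m| := by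
        intro x y
        have hgx' : g' x = g x - min (g x) m := rfl
        have hgy' : g' y = g y - min (g y) m := rfl
        rw [hgx', hgy', hmin x, hmin y]
        by_cases hx : g x = 0 <;> by_cases hy : g y = 0
        · simp [hx, hy]
        · have hmy : m ≤ g y := hx₀min y (by simp [hS, hy])
          simp only [hx, hy, ne_eq, not_true_eq_false, if_false, not_false_eq_true, if_true,
            sub_zero, zero_sub]
          simp only [abs_neg]
          rw [abs_of_nonneg (hg y), abs_of_nonneg (by linarith : (0:ℝ) ≤ g y - m),
            abs_of_nonneg hmpos.le]
          ring
        · have hmx : m ≤ g x := hx₀min x (by simp [hS, hx])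
          simp only [hx, hy, ne_eq, not_true_eq_false, if_false, not_false_eq_true, if_true,
            sub_zero]
          rw [abs_of_nonneg (hg x), abs_of_nonneg (by linarith : (0:ℝ) ≤ g x - m),
            abs_of_nonneg hmpos.le]
          ring
        · simp only [hx, hy, ne_eq, not_false_eq_true, if_true]
          have h1 : g x - m - (g y - m) = g x - g y := by ring
          rw [h1]
          simp
      -- split the right-hand side
      have hsplit : (∑ x, ∑ y, if adj x y then |g x - g y| else 0)
          = (∑ x, ∑ y, if adj x y then |g' x - g' y| else 0)
            + ∑ x, ∑ y, if adj x y then |min (g x) m - min (g y) m| else 0 := by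
        rw [← Finset.sum_add_distrib]
        refine Finset.sum_congr rfl fun x _ => ?_
        rw [← Finset.sum_add_distrib]
        refine Finset.sum_congr rfl fun y _ => ?_
        by_cases hxy : adj x y
        · simp [hxy, hpoint x y]
        · simp [hxy]
      have hindf : ∀ x y, (if adj x y then |min (g x) m - min (g y) m| else 0)
          = m * ((if x ∈ S ∧ y ∉ S ∧ adj x y then (1:ℝ) else 0)
            + (if y ∈ S ∧ x ∉ S ∧ adj x y then (1:ℝ) else 0)) := by
        intro x y
        have hxS : x ∈ S ↔ g x ≠ 0 := by simp [hS]
        have hyS : y ∈ S ↔ g y ≠ 0 := by simp [hS]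
        rw [hmin x, hmin y]
        by_cases hxy : adj x y <;> by_cases hx : g x ≠ 0 <;> by_cases hy : g y ≠ 0 <;>
          simp [hxy, hx, hy, hxS, hyS, abs_of_nonneg hmpos.le, sub_zero, zero_sub, abs_neg]
      have hswap2 : (∑ x, ∑ y, if y ∈ S ∧ x ∉ S ∧ adj x y then (1:ℝ) else 0)
          = ∑ x, ∑ y, if x ∈ S ∧ y ∉ S ∧ adj x y then (1:ℝ) else 0 := by
        rw [Finset.sum_comm]
        refine Finset.sum_congr rfl fun a _ => Finset.sum_congr rfl fun b _ => ?_
        refine if_congr ?_ rfl rfl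
        constructor
        · rintro ⟨h1, h2, h3⟩; exact ⟨h1, h2, hsymm _ _ h3⟩
        · rintro ⟨h1, h2, h3⟩; exact ⟨h1, h2, hsymm _ _ h3⟩
      have hcutterm : (∑ x, ∑ y, if adj x y then |min (g x) m - min (g y) m| else 0)
          = m * (2 * ((edgeCut adj S).card : ℝ)) := by
        have : (∑ x, ∑ y, if adj x y then |min (g x) m - min (g y) m| else 0)
            = ∑ x, ∑ y, m * ((if x ∈ S ∧ y ∉ S ∧ adj x y then (1:ℝ) else 0)
              + (if y ∈ S ∧ x ∉ S ∧ adj x y then (1:ℝ) else 0)) := by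
          exact Finset.sum_congr rfl fun x _ => Finset.sum_congr rfl fun y _ => hindf x y
        rw [this]
        simp only [← Finset.mul_sum]
        rw [Finset.sum_congr rfl fun x (_ : x ∈ Finset.univ) => Finset.sum_add_distrib,
          Finset.sum_add_distrib]
        rw [hswap2, ← edgeCut_card_eq]
        ring
      have hdeg_split : (∑ x, (deg adj x : ℝ) * g x)
          = (∑ x, (deg adj x : ℝ) * g' x) + m * (vol adj S : ℝ) := by
        have hterm : ∀ x, (deg adj x : ℝ) * g x
            = (deg adj x : ℝ) * g' x + (if g x ≠ 0 then (deg adj x : ℝ) * m else 0) := by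
          intro x
          have hgx' : g' x = g x - min (g x) m := rfl
          rw [hgx', hmin x]
          by_cases hx : g x ≠ 0 <;> simp [hx] <;> ring
        rw [Finset.sum_congr rfl fun x _ => hterm x, Finset.sum_add_distrib]
        congr 1
        rw [← Finset.sum_filter]
        have hv : ((vol adj S : ℕ) : ℝ) = ∑ x ∈ S, (deg adj x : ℝ) := by
          rw [vol]; push_cast; rfl
        rw [hv, Finset.mul_sum, hS]
        exact Finset.sum_congr rfl fun x _ => mul_comm _ _
      have hcutS : h * (vol adj S : ℝ) ≤ ((edgeCut adj S).card : ℝ) := hcut S hsupp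
      have h2m : (0:ℝ) ≤ 2 * m := by linarith
      have := mul_le_mul_of_nonneg_left hcutS h2m
      rw [hsplit, hcutterm, hdeg_split]
      nlinarith [hIH]
    · have hzero : ∀ x, g x = 0 := by
        intro x
        by_contra hx
        exact hne ⟨x, by simp [hx]⟩
      simp [hzero]

lemma part_bound (hsymm : ∀ x y, adj x y → adj y x) (h : ℝ) (hh : 0 ≤ h)
    (hcut : ∀ X : Finset ι, 2 * vol adj X ≤ vol adj Finset.univ →
      h * (vol adj X : ℝ) ≤ ((edgeCut adj X).card : ℝ))
    (f : ι → ℝ) (hf : ∀ x, 0 ≤ f x)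
    (hsupp : 2 * vol adj (Finset.univ.filter fun x => f x ≠ 0) ≤ vol adj Finset.univ) :
    h ^ 2 * ∑ x, (deg adj x : ℝ) * f x ^ 2
      ≤ ∑ x, ∑ y, if adj x y then (f x - f y) ^ 2 else 0 := by
  set D : ℝ := ∑ x, (deg adj x : ℝ) * f x ^ 2 with hD
  set Q : ℝ := ∑ x, ∑ y, if adj x y then (f x - f y) ^ 2 else 0 with hQ
  have hDnn : 0 ≤ D := Finset.sum_nonneg fun x _ => by positivity
  have hQnn : 0 ≤ Q := Finset.sum_nonneg fun x _ => Finset.sum_nonneg fun y _ => by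
    split <;> positivity
  -- co-area applied to g = f ^ 2
  have hfilter : (Finset.univ.filter fun x => f x ^ 2 ≠ 0)
      = Finset.univ.filter fun x => f x ≠ 0 := by
    refine Finset.filter_congr fun x _ => ?_
    simp [pow_eq_zero_iff]
  have hA := coarea adj hsymm h hh hcut (Finset.univ.filter fun x => f x ^ 2 ≠ 0).card
    (fun x => f x ^ 2) le_rfl (fun x => by positivity) (by rw [hfilter]; exact hsupp)
  -- Cauchy–Schwarz over pairs
  set a : ι × ι → ℝ := fun p => if adj p.1 p.2 then |f p.1 - f p.2| else 0 with ha
  set b : ι × ι → ℝ := fun p => if adj p.1 p.2 then f p.1 + f p.2 else 0 with hb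
  have hCS := Finset.sum_mul_sq_le_sq_mul_sq Finset.univ a b
  have hab : (∑ p : ι × ι, a p * b p) = ∑ x, ∑ y, if adj x y then |f x ^ 2 - f y ^ 2| else 0 := by
    rw [Fintype.sum_prod_type]
    refine Finset.sum_congr rfl fun x _ => Finset.sum_congr rfl fun y _ => ?_
    by_cases hp : adj x y
    · simp only [ha, hb, hp, if_true]
      rw [← abs_of_nonneg (by have := hf x; have := hf y; linarith : (0:ℝ) ≤ f x + f y),
        ← abs_mul]
      congr 1
      ring
    · simp [ha, hb, hp]
  have ha2 : (∑ p : ι × ι, a p ^ 2) = Q := by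
    rw [hQ, Fintype.sum_prod_type]
    refine Finset.sum_congr rfl fun x _ => Finset.sum_congr rfl fun y _ => ?_
    by_cases hp : adj x y <;> simp [ha, hp, sq_abs]
  have hdiag : ∀ c : ι → ℝ, (∑ x, ∑ y, if adj x y then c x else 0) = ∑ x, (deg adj x : ℝ) * c x :=
    fun c => Finset.sum_congr rfl fun x _ => sum_ite_adj_const adj x (c x)
  have hb2 : (∑ p : ι × ι, b p ^ 2) ≤ 4 * D := by
    rw [Fintype.sum_prod_type]
    have step1 : (∑ x, ∑ y, (if adj x y then f x + f y else 0) ^ 2)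
        ≤ ∑ x, ∑ y, ((if adj x y then 2 * f x ^ 2 else 0) + if adj x y then 2 * f y ^ 2 else 0) := by
      refine Finset.sum_le_sum fun x _ => Finset.sum_le_sum fun y _ => ?_
      by_cases hp : adj x y
      · simp only [hp, if_true]
        nlinarith [sq_nonneg (f x - f y)]
      · simp [hp]
    have step2 : (∑ x, ∑ y, ((if adj x y then 2 * f x ^ 2 else 0) + if adj x y then 2 * f y ^ 2 else 0))
        = 4 * D := by
      simp only [Finset.sum_add_distrib]
      rw [sum_adj_swap adj hsymm (fun x y => 2 * f y ^ 2)]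
      have e1 : (∑ x, ∑ y, if adj x y then 2 * f x ^ 2 else 0) = 2 * D := by
        rw [hdiag (fun x => 2 * f x ^ 2), hD, Finset.mul_sum]
        exact Finset.sum_congr rfl fun x _ => by ring
      rw [e1]
      ring
    calc (∑ x, ∑ y, (if adj x y then f x + f y else 0) ^ 2)
        ≤ ∑ x, ∑ y, ((if adj x y then 2 * f x ^ 2 else 0) + if adj x y then 2 * f y ^ 2 else 0) :=
          step1
      _ = 4 * D := step2
  -- combine: (2 h D)^2 ≤ A^2 ≤ Q * 4D  where A = ∑ |f²-f²| ≥ 2hD ≥ 0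
  have hAnn : 2 * h * D ≤ ∑ p : ι × ι, a p * b p := by
    rw [hab]
    calc 2 * h * D = 2 * h * ∑ x, (deg adj x : ℝ) * f x ^ 2 := rfl
      _ ≤ _ := hA
  have hsq : (2 * h * D) ^ 2 ≤ Q * (4 * D) := by
    have h1 : (0:ℝ) ≤ 2 * h * D := by positivity
    have h2 : (2 * h * D) ^ 2 ≤ (∑ p : ι × ι, a p * b p) ^ 2 := by nlinarith
    have h3 := Finset.sum_mul_sq_le_sq_mul_sq Finset.univ a b
    have h4 : (∑ p : ι × ι, a p ^ 2) * (∑ p : ι × ι, b p ^ 2) ≤ Q * (4 * D) := by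
      rw [ha2]
      exact mul_le_mul_of_nonneg_left hb2 hQnn
    calc (2 * h * D) ^ 2 ≤ (∑ p : ι × ι, a p * b p) ^ 2 := h2
      _ ≤ _ := h3.trans h4
  rcases eq_or_lt_of_le hDnn with hD0 | hD0
  · rw [← hD0]; simpa using hQnn
  · nlinarith [hsq]

lemma exists_median [Nonempty ι] (v : ι → ℝ) :
    ∃ c : ℝ, 2 * vol adj (Finset.univ.filter fun x => c < v x) ≤ vol adj Finset.univ ∧
      2 * vol adj (Finset.univ.filter fun x => v x < c) ≤ vol adj Finset.univ := by
  classical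
  set V := vol adj (Finset.univ : Finset ι) with hV
  have hsne : (Finset.univ.image v).Nonempty :=
    ⟨v (Classical.arbitrary ι), Finset.mem_image_of_mem v (Finset.mem_univ _)⟩
  set T := (Finset.univ.image v).filter
    (fun t => V ≤ 2 * vol adj (Finset.univ.filter fun x => v x ≤ t)) with hT
  have hTne : T.Nonempty := by
    refine ⟨(Finset.univ.image v).max' hsne, Finset.mem_filter.mpr ⟨(Finset.univ.image v).max'_mem hsne, ?_⟩⟩
    have : (Finset.univ.filter fun x => v x ≤ (Finset.univ.image v).max' hsne) = Finset.univ := by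
      refine Finset.filter_true_of_mem fun x _ => ?_
      exact Finset.le_max' _ _ (Finset.mem_image_of_mem v (Finset.mem_univ x))
    rw [this]
    omega
  set c := T.min' hTne with hc
  have hcT : c ∈ T := T.min'_mem hTne
  have hcle : V ≤ 2 * vol adj (Finset.univ.filter fun x => v x ≤ c) :=
    (Finset.mem_filter.mp hcT).2
  refine ⟨c, ?_, ?_⟩
  · have hcompl : (Finset.univ.filter fun x => c < v x)
        = Finset.univ \ (Finset.univ.filter fun x => v x ≤ c) := by
      ext x; simp [not_le]
    have := vol_split adj (Finset.univ.filter fun x => v x ≤ c)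
    rw [hcompl]
    omega
  · by_contra hcon
    push_neg at hcon
    set W := Finset.univ.filter fun x => v x < c with hW
    have hWne : W.Nonempty := by
      rcases Finset.eq_empty_or_nonempty W with hE | hNE
      · rw [hE] at hcon; simp [vol] at hcon
      · exact hNE
    have hWine : (W.image v).Nonempty := hWne.image v
    set t' := (W.image v).max' hWine with ht'
    obtain ⟨x', hx'W, hx'⟩ := Finset.mem_image.mp ((W.image v).max'_mem hWine)
    have ht'c : t' < c := by
      have h2 := (Finset.mem_filter.mp hx'W).2
      rw [hx'] at h2
      exact h2
    have hWsub : W ⊆ Finset.univ.filter fun x => v x ≤ t' := by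
      intro x hx
      refine Finset.mem_filter.mpr ⟨Finset.mem_univ x, ?_⟩
      exact Finset.le_max' _ _ (Finset.mem_image_of_mem v hx)
    have hvolW : V ≤ 2 * vol adj (Finset.univ.filter fun x => v x ≤ t') := by
      have := vol_mono adj hWsub
      omega
    have ht'T : t' ∈ T := by
      refine Finset.mem_filter.mpr ⟨?_, hvolW⟩
      have := Finset.mem_image_of_mem v (Finset.mem_univ x')
      rw [hx'] at this
      exact this
    have := T.min'_le t' ht'T
    rw [← hc] at this
    linarith

lemma max_sq_add (a b : ℝ) :
    (max a 0 - max b 0) ^ 2 + (max (-a) 0 - max (-b) 0) ^ 2 ≤ (a - b) ^ 2 := by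
  rcases le_total a 0 with ha | ha <;> rcases le_total b 0 with hb | hb
  · rw [max_eq_right ha, max_eq_right hb, max_eq_left (neg_nonneg.mpr ha),
      max_eq_left (neg_nonneg.mpr hb)]
    nlinarith
  · rw [max_eq_right ha, max_eq_left hb, max_eq_left (neg_nonneg.mpr ha),
      max_eq_right (neg_nonpos.mpr hb)]
    nlinarith [mul_nonneg (neg_nonneg.mpr ha) hb]
  · rw [max_eq_left ha, max_eq_right hb, max_eq_right (neg_nonpos.mpr ha),
      max_eq_left (neg_nonneg.mpr hb)]
    nlinarith [mul_nonneg ha (neg_nonneg.mpr hb)]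
  · rw [max_eq_left ha, max_eq_left hb, max_eq_right (neg_nonpos.mpr ha),
      max_eq_right (neg_nonpos.mpr hb)]
    nlinarith

lemma max_sq_split (a : ℝ) : (max a 0) ^ 2 + (max (-a) 0) ^ 2 = a ^ 2 := by
  rcases le_total a 0 with ha | ha
  · rw [max_eq_right ha, max_eq_left (neg_nonneg.mpr ha)]; ring
  · rw [max_eq_left ha, max_eq_right (neg_nonpos.mpr ha)]; ring


set_option maxHeartbeats 2000000 in
/-- If a finite connected graph satisfies a `d`-dimensional isoperimetric inequality with
constant `ν₂`, has volume at most `ν₁ (R/R₀)^d`, and all edge lengths at most `R₀`, then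
`λ₂ > 0` and `λ₂^{-1/2} ≤ C R` with `C` depending only on `ν₁`, `ν₂` (and `d`). -/
theorem poincare_constant_from_isoperimetry
    (d : ℕ) (hd : 0 < d) (ν₁ ν₂ : ℝ) (hν₁ : 0 < ν₁) (hν₂ : 0 < ν₂) :
    ∃ C : ℝ, 0 < C ∧
      ∀ (ι : Type) [Fintype ι] [DecidableEq ι]
        (adj : ι → ι → Prop) [DecidableRel adj] (len : ι → ι → ℝ) (R R₀ : ℝ),
        (∀ x y, adj x y → adj y x) →
        (∀ x, ¬ adj x x) →
        (∀ x y : ι, Relation.ReflTransGen adj x y) →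
        (∃ x y : ι, adj x y) →
        (∀ x y, len x y = len y x) →
        0 < R₀ → R₀ ≤ R →
        (∀ x y, adj x y → 0 < len x y ∧ len x y ≤ R₀) →
        ((vol adj (Finset.univ : Finset ι) : ℝ) ≤ ν₁ * (R / R₀) ^ d) →
        (∀ X : Finset ι, vol adj X ≤ vol adj (Finset.univ \ X) →
          (vol adj X : ℝ) ^ (((d : ℝ) - 1) / (d : ℝ)) ≤
            ν₂ * ((edgeCut adj X).card : ℝ)) →
        0 < lam2 adj len ∧ Real.sqrt (lam2 adj len)⁻¹ ≤ C * R := by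
  refine ⟨ν₂ * ν₁ ^ ((1:ℝ)/(d:ℝ)), by positivity, ?_⟩
  intro ι _ _ adj _ len R R₀ hsymm hirr hconn hedge hlensymm hR₀ hRR₀ hlen hvolbd hiso
  obtain ⟨a, b, hab⟩ := hedge
  have hι : Nonempty ι := ⟨a⟩
  have hd' : (d:ℝ) ≠ 0 := Nat.cast_ne_zero.mpr hd.ne'
  have hRpos : 0 < R := lt_of_lt_of_le hR₀ hRR₀
  -- every vertex has a neighbour
  have hnbr : ∀ x : ι, ∃ z, adj x z := by
    intro x
    rcases (hconn x a).cases_head with heq | ⟨z, hz, _⟩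
    · exact ⟨b, heq ▸ hab⟩
    · exact ⟨z, hz⟩
  have hdegpos : ∀ x, 0 < deg adj x := by
    intro x
    obtain ⟨z, hz⟩ := hnbr x
    exact Finset.card_pos.mpr ⟨z, by simp [deg, hz]⟩
  set V := vol adj (Finset.univ : Finset ι) with hVdef
  have hVpos : 0 < V :=
    Finset.sum_pos (fun x _ => hdegpos x) ⟨a, Finset.mem_univ a⟩
  have hV1 : (1:ℝ) ≤ (V:ℝ) := by exact_mod_cast hVpos
  have hVd : (0:ℝ) < (V:ℝ) ^ ((1:ℝ)/(d:ℝ)) := Real.rpow_pos_of_pos (by linarith) _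
  set h : ℝ := (ν₂ * (V:ℝ) ^ ((1:ℝ)/(d:ℝ)))⁻¹ with hhdef
  have hhpos : 0 < h := by rw [hhdef]; positivity
  -- the cut bound implied by isoperimetry
  have hcut : ∀ X : Finset ι, 2 * vol adj X ≤ V →
      h * (vol adj X : ℝ) ≤ ((edgeCut adj X).card : ℝ) := by
    intro X hX
    have hsplitv := vol_split adj X
    have hXc : vol adj X ≤ vol adj (Finset.univ \ X) := by omega
    have hiso' := hiso X hXc
    by_cases hX0 : vol adj X = 0
    · rw [hX0]
      simp
    · have hvx1 : (1:ℝ) ≤ (vol adj X : ℝ) := by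
        exact_mod_cast Nat.one_le_iff_ne_zero.mpr hX0
      have hvxpos : (0:ℝ) < (vol adj X : ℝ) := by linarith
      have hXV : ((vol adj X : ℕ) : ℝ) ≤ (V:ℝ) := by
        exact_mod_cast vol_mono adj (Finset.subset_univ X)
      have hsum : ((d:ℝ)-1)/(d:ℝ) + (1:ℝ)/(d:ℝ) = 1 := by field_simp; ring
      have hself : (vol adj X : ℝ)
          = (vol adj X : ℝ) ^ (((d:ℝ)-1)/(d:ℝ)) * (vol adj X : ℝ) ^ ((1:ℝ)/(d:ℝ)) := by
        rw [← Real.rpow_add hvxpos, hsum, Real.rpow_one]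
      have hmono : (vol adj X : ℝ) ^ ((1:ℝ)/(d:ℝ)) ≤ (V:ℝ) ^ ((1:ℝ)/(d:ℝ)) :=
        Real.rpow_le_rpow hvxpos.le hXV (by positivity)
      have hkey : (vol adj X : ℝ) ≤ ν₂ * ((edgeCut adj X).card : ℝ) * (V:ℝ) ^ ((1:ℝ)/(d:ℝ)) := by
        calc (vol adj X : ℝ)
            = (vol adj X : ℝ) ^ (((d:ℝ)-1)/(d:ℝ)) * (vol adj X : ℝ) ^ ((1:ℝ)/(d:ℝ)) := hself
          _ ≤ (vol adj X : ℝ) ^ (((d:ℝ)-1)/(d:ℝ)) * (V:ℝ) ^ ((1:ℝ)/(d:ℝ)) :=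
              mul_le_mul_of_nonneg_left hmono (Real.rpow_nonneg hvxpos.le _)
          _ ≤ ν₂ * ((edgeCut adj X).card : ℝ) * (V:ℝ) ^ ((1:ℝ)/(d:ℝ)) :=
              mul_le_mul_of_nonneg_right hiso' hVd.le
      rw [hhdef, inv_mul_le_iff₀ (by positivity)]
      nlinarith [hkey]
  -- vertex weights
  set w : ι → ℝ := fun x => (1/2) * ∑ y, if adj x y then len x y else 0 with hwdef
  have hwpos : ∀ x, 0 < w x := by
    intro x
    obtain ⟨z, hz⟩ := hnbr x
    have hpos : 0 < ∑ y, if adj x y then len x y else 0 := by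
      refine Finset.sum_pos' (fun y _ => ?_) ⟨z, Finset.mem_univ z, ?_⟩
      · split
        · exact (hlen x _ ‹_›).1.le
        · exact le_refl 0
      · simpa [hz] using (hlen x z hz).1
    rw [hwdef]
    simpa using by linarith
  have hwd : ∀ x, w x ≤ R₀/2 * (deg adj x : ℝ) := by
    intro x
    have hle : (∑ y, if adj x y then len x y else 0) ≤ (deg adj x : ℝ) * R₀ := by
      rw [← sum_ite_adj_const adj x R₀]
      refine Finset.sum_le_sum fun y _ => ?_
      split
      · exact (hlen x _ ‹_›).2
      · exact le_refl 0
    have hwx : w x = (1/2) * ∑ y, if adj x y then len x y else 0 := rfl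
    rw [hwx]
    linarith
  set lam0 : ℝ := h^2 / R₀^2 with hlam0def
  have hlam0 : 0 < lam0 := by rw [hlam0def]; positivity
  -- the Rayleigh-quotient set
  have hba : a ≠ b := fun hq => hirr b (hq ▸ hab)
  have hone : {t : ℝ | ∃ v : ι → ℝ, v ≠ 0 ∧
      (∑ x, ((1/2) * ∑ y, if adj x y then len x y else 0) * v x) = 0 ∧
      t = Lform adj len v / Mform adj len v}.Nonempty := by
    set v₀ : ι → ℝ := fun x => if x = a then w b else if x = b then -(w a) else 0 with hv₀
    refine ⟨Lform adj len v₀ / Mform adj len v₀, v₀, ?_, ?_, rfl⟩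
    · intro h0
      have := congrFun h0 a
      simp [hv₀] at this
      exact (hwpos b).ne' this
    · have hterm : ∀ x, w x * v₀ x
          = (if x = a then w a * w b else 0) + (if x = b then -(w b * w a) else 0) := by
        intro x
        by_cases hxa : x = a
        · subst hxa
          simp [hv₀, hba]
        · by_cases hxb : x = b
          · have hba' : ¬ b = a := fun hq => hxa (hxb.trans hq)
            rw [hxb, show v₀ b = -(w a) from by simp [hv₀, hba'], if_neg hba', if_pos rfl]
            ring
          · simp [hv₀, hxa, hxb]
      have : (∑ x, w x * v₀ x) = 0 := by
        rw [Finset.sum_congr rfl fun x _ => hterm x, Finset.sum_add_distrib]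
        simp [Finset.sum_ite_eq']
        ring
      exact this
  -- lower bound on every Rayleigh quotient
  have hlb : lam0 ≤ lam2 adj len := by
    rw [lam2]
    refine le_csInf hone ?_
    rintro t ⟨v, hv0, horth, rfl⟩
    have horth' : (∑ x, w x * v x) = 0 := horth
    obtain ⟨c, hmed1, hmed2⟩ := exists_median adj v
    set u : ι → ℝ := fun x => v x - c with hudef
    set fp : ι → ℝ := fun x => max (u x) 0 with hfpdef
    set fm : ι → ℝ := fun x => max (-u x) 0 with hfmdef
    -- support conditions
    have hsupp_p : (Finset.univ.filter fun x => fp x ≠ 0)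
        ⊆ Finset.univ.filter fun x => c < v x := by
      intro x hx
      have hx2 := (Finset.mem_filter.mp hx).2
      refine Finset.mem_filter.mpr ⟨Finset.mem_univ x, ?_⟩
      by_contra hle
      push_neg at hle
      exact hx2 (max_eq_right (by show v x - c ≤ 0; linarith))
    have hsupp_m : (Finset.univ.filter fun x => fm x ≠ 0)
        ⊆ Finset.univ.filter fun x => v x < c := by
      intro x hx
      have hx2 := (Finset.mem_filter.mp hx).2
      refine Finset.mem_filter.mpr ⟨Finset.mem_univ x, ?_⟩
      by_contra hle
      push_neg at hle
      exact hx2 (max_eq_right (by show -(v x - c) ≤ 0; linarith))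
    have hcond_p : 2 * vol adj (Finset.univ.filter fun x => fp x ≠ 0) ≤ V := by
      have := vol_mono adj hsupp_p
      omega
    have hcond_m : 2 * vol adj (Finset.univ.filter fun x => fm x ≠ 0) ≤ V := by
      have := vol_mono adj hsupp_m
      omega
    have hQp := part_bound adj hsymm h hhpos.le hcut fp (fun x => le_max_right _ _) hcond_p
    have hQm := part_bound adj hsymm h hhpos.le hcut fm (fun x => le_max_right _ _) hcond_m
    set Dsum : ℝ := ∑ x, (deg adj x : ℝ) * u x ^ 2 with hDsumdef
    have hDnn : 0 ≤ Dsum :=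
      Finset.sum_nonneg fun x _ => mul_nonneg (Nat.cast_nonneg _) (sq_nonneg _)
    have hsplitD : (∑ x, (deg adj x : ℝ) * fp x ^ 2) + (∑ x, (deg adj x : ℝ) * fm x ^ 2)
        = Dsum := by
      rw [hDsumdef, ← Finset.sum_add_distrib]
      refine Finset.sum_congr rfl fun x _ => ?_
      rw [← mul_add]
      congr 1
      exact max_sq_split (u x)
    set Qsum : ℝ := ∑ x, ∑ y, if adj x y then (u x - u y) ^ 2 else 0 with hQsumdef
    have hQsplit : (∑ x, ∑ y, if adj x y then (fp x - fp y) ^ 2 else 0)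
        + (∑ x, ∑ y, if adj x y then (fm x - fm y) ^ 2 else 0) ≤ Qsum := by
      rw [hQsumdef, ← Finset.sum_add_distrib]
      refine Finset.sum_le_sum fun x _ => ?_
      rw [← Finset.sum_add_distrib]
      refine Finset.sum_le_sum fun y _ => ?_
      by_cases hxy : adj x y
      · simp only [hxy, if_true]
        exact max_sq_add (u x) (u y)
      · simp [hxy]
    have hQD : h ^ 2 * Dsum ≤ Qsum := by
      refine le_trans ?_ hQsplit
      rw [← hsplitD, mul_add]
      exact add_le_add hQp hQm
    have hLQ : Qsum ≤ 2 * R₀ * Lform adj len v := by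
      rw [hQsumdef, Lform, Finset.mul_sum]
      refine Finset.sum_le_sum fun x _ => ?_
      have e1 : 2 * R₀ * ((1/2) * ∑ y, if adj x y then (v x - v y) ^ 2 / len x y else 0)
          = ∑ y, R₀ * if adj x y then (v x - v y) ^ 2 / len x y else 0 := by
        rw [show 2 * R₀ * ((1/2) * ∑ y, if adj x y then (v x - v y) ^ 2 / len x y else 0)
            = R₀ * ∑ y, if adj x y then (v x - v y) ^ 2 / len x y else 0 from by ring,
          Finset.mul_sum]
      rw [e1]
      refine Finset.sum_le_sum fun y _ => ?_
      by_cases hxy : adj x y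
      · simp only [hxy, if_true]
        have huv : u x - u y = v x - v y := by show v x - c - (v y - c) = _; ring
        rw [huv]
        obtain ⟨hl1, hl2⟩ := hlen x y hxy
        rw [← mul_div_assoc, le_div_iff₀ hl1]
        nlinarith [sq_nonneg (v x - v y)]
      · simp [hxy]
    -- mass comparison
    have hMw : Mform adj len v = ∑ x, w x * v x ^ 2 := by
      rw [Mform]
      refine Finset.sum_congr rfl fun x _ => ?_
      have e2 : (∑ y, if adj x y then len x y * v x ^ 2 else 0)
          = (∑ y, if adj x y then len x y else 0) * v x ^ 2 := by
        rw [Finset.sum_mul]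
        refine Finset.sum_congr rfl fun y _ => ?_
        split <;> simp
      rw [e2]
      show (1/2) * ((∑ y, if adj x y then len x y else 0) * v x ^ 2)
        = ((1/2) * ∑ y, if adj x y then len x y else 0) * v x ^ 2
      ring
    have hMpos : 0 < Mform adj len v := by
      rw [hMw]
      obtain ⟨x₀, hx₀⟩ := Function.ne_iff.mp hv0
      refine Finset.sum_pos' (fun x _ => mul_nonneg (hwpos x).le (sq_nonneg _))
        ⟨x₀, Finset.mem_univ x₀, ?_⟩
      have : 0 < v x₀ ^ 2 :=
        lt_of_le_of_ne (sq_nonneg _) (Ne.symm (pow_ne_zero 2 hx₀))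
      exact mul_pos (hwpos x₀) this
    have hMu : Mform adj len v ≤ ∑ x, w x * u x ^ 2 := by
      have hterm : ∀ x : ι, w x * u x ^ 2
          = w x * v x ^ 2 - 2 * c * (w x * v x) + c ^ 2 * w x := by
        intro x
        show w x * (v x - c) ^ 2 = _
        ring
      have e3 : (∑ x, w x * u x ^ 2)
          = (∑ x, w x * v x ^ 2) - 2 * c * (∑ x, w x * v x) + c ^ 2 * (∑ x, w x) := by
        rw [Finset.sum_congr rfl fun x _ => hterm x, Finset.sum_add_distrib,
          Finset.sum_sub_distrib, ← Finset.mul_sum, ← Finset.mul_sum]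
      have hwsum : 0 ≤ ∑ x, w x := Finset.sum_nonneg fun x _ => (hwpos x).le
      rw [hMw, e3, horth']
      nlinarith [sq_nonneg c]
    have hMD : Mform adj len v ≤ R₀/2 * Dsum := by
      refine le_trans hMu ?_
      rw [hDsumdef, Finset.mul_sum]
      refine Finset.sum_le_sum fun x _ => ?_
      calc w x * u x ^ 2 ≤ (R₀/2 * (deg adj x : ℝ)) * u x ^ 2 :=
            mul_le_mul_of_nonneg_right (hwd x) (sq_nonneg _)
        _ = R₀/2 * ((deg adj x : ℝ) * u x ^ 2) := by ring
    -- combine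
    have hfinal : lam0 * Mform adj len v ≤ Lform adj len v := by
      have h1 : h ^ 2 * Mform adj len v ≤ h ^ 2 * (R₀/2 * Dsum) :=
        mul_le_mul_of_nonneg_left hMD (by positivity)
      have h2 : h ^ 2 * Dsum ≤ 2 * R₀ * Lform adj len v := le_trans hQD hLQ
      have h2' : R₀/2 * (h ^ 2 * Dsum) ≤ R₀/2 * (2 * R₀ * Lform adj len v) :=
        mul_le_mul_of_nonneg_left h2 (by positivity)
      have h3 : h ^ 2 * Mform adj len v ≤ R₀ ^ 2 * Lform adj len v := by
        linarith
      rw [hlam0def, div_mul_eq_mul_div, div_le_iff₀ (by positivity : (0:ℝ) < R₀ ^ 2)]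
      linarith
    rw [le_div_iff₀ hMpos]
    exact hfinal
  have hl2pos : 0 < lam2 adj len := lt_of_lt_of_le hlam0 hlb
  refine ⟨hl2pos, ?_⟩
  -- final numerics
  have hinv : (lam2 adj len)⁻¹ ≤ lam0⁻¹ := by
    exact inv_anti₀ hlam0 hlb
  have hsq : Real.sqrt (lam2 adj len)⁻¹ ≤ Real.sqrt lam0⁻¹ := Real.sqrt_le_sqrt hinv
  have hlam0inv : lam0⁻¹ = (R₀ / h)^2 := by
    rw [hlam0def, inv_div, div_pow]
  have hsqrt0 : Real.sqrt lam0⁻¹ = R₀ / h := by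
    rw [hlam0inv, Real.sqrt_sq (by positivity)]
  have hRh : R₀ / h = R₀ * (ν₂ * (V:ℝ) ^ ((1:ℝ)/(d:ℝ))) := by
    rw [hhdef, div_eq_mul_inv, inv_inv]
  have hrr : (0:ℝ) < R / R₀ := by positivity
  have hVle : (V:ℝ) ^ ((1:ℝ)/(d:ℝ)) ≤ ν₁ ^ ((1:ℝ)/(d:ℝ)) * (R/R₀) := by
    have h1 : (V:ℝ) ^ ((1:ℝ)/(d:ℝ)) ≤ (ν₁ * (R/R₀)^d) ^ ((1:ℝ)/(d:ℝ)) :=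
      Real.rpow_le_rpow (Nat.cast_nonneg V) hvolbd (by positivity)
    rw [Real.mul_rpow hν₁.le (by positivity), ← Real.rpow_natCast (R/R₀) d,
      ← Real.rpow_mul hrr.le] at h1
    have hde : (d:ℝ) * ((1:ℝ)/(d:ℝ)) = 1 := by field_simp
    rw [hde, Real.rpow_one] at h1
    exact h1
  calc Real.sqrt (lam2 adj len)⁻¹ ≤ Real.sqrt lam0⁻¹ := hsq
    _ = R₀ * (ν₂ * (V:ℝ) ^ ((1:ℝ)/(d:ℝ))) := by rw [hsqrt0, hRh]
    _ ≤ R₀ * (ν₂ * (ν₁ ^ ((1:ℝ)/(d:ℝ)) * (R/R₀))) := by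
        refine mul_le_mul_of_nonneg_left ?_ hR₀.le
        exact mul_le_mul_of_nonneg_left hVle hν₂.le
    _ = ν₂ * ν₁ ^ ((1:ℝ)/(d:ℝ)) * R := by
        field_simp
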